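/- Let v ∈ H¹(0,∞) and r as above with θ̄ ≥ r²∂ₓr ≥ θ̲ > 0 and r(0) > 0. Then for every x > 0, |v(x)|² ≤ r(x)⁻² ( ‖v‖²_{L²(0,∞)} + ‖r²∂ₓv‖²_{L²(0,∞)} ). -/

import Mathlib

open MeasureTheory Set

/-- Pointwise control, first inequality of (2.2) in Lemma 2.1. -/
theorem pointwise_control_one
    (v v' r r' : ℝ → ℝ) (θ₁ θ₂ : ℝ)
    (hv : ∀ x ∈ Ici (0:ℝ), HasDerivAt v (v' x) x)
    (hr : ∀ x ∈ Ici (0:ℝ), HasDerivAt r (r' x) x)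
    (hr0 : 0 < r 0)
    (hθ₁ : 0 < θ₁)
    (hlb : ∀ x ∈ Ici (0:ℝ), θ₁ ≤ (r x)^2 * r' x)
    (hub : ∀ x ∈ Ici (0:ℝ), (r x)^2 * r' x ≤ θ₂)
    (hvL2 : MemLp v 2 (volume.restrict (Ioi 0)))
    (hvxL2 : MemLp (fun x => (r x)^2 * v' x) 2 (volume.restrict (Ioi 0))) :
    ∀ x > (0:ℝ),
      (v x)^2 ≤ ((r x)^2)⁻¹ *
        ((∫ y in Ioi (0:ℝ), (v y)^2) + ∫ y in Ioi (0:ℝ), ((r y)^2 * v' y)^2) := by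
  -- r is positive on [0, ∞)
  have hrpos : ∀ z ∈ Ici (0:ℝ), 0 < r z := by
    intro z hz
    by_contra h
    push_neg at h
    have hcont : ContinuousOn r (Icc 0 z) := fun w hw =>
      ((hr w hw.1).continuousAt).continuousWithinAt
    obtain ⟨c, hc, hc0⟩ := intermediate_value_Icc' hz hcont ⟨h, hr0.le⟩
    have := hlb c hc.1
    rw [hc0] at this
    simp at this
    linarith
  -- r is monotone on [0, ∞)
  have hrmono : MonotoneOn r (Ici (0:ℝ)) := by
    have : StrictMonoOn r (Ici (0:ℝ)) := by
      apply strictMonoOn_of_deriv_pos (convex_Ici 0)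
        (fun w hw => ((hr w hw).continuousAt).continuousWithinAt)
      intro z hz
      rw [interior_Ici] at hz
      have hz0 : z ∈ Ici (0:ℝ) := mem_Ici.2 (le_of_lt (mem_Ioi.1 hz))
      rw [(hr z hz0).deriv]
      have h1 := hlb z hz0
      have h2 := hrpos z hz0
      nlinarith
    exact this.monotoneOn
  -- integrability of the squares
  have hIv2 : IntegrableOn (fun y => (v y)^2) (Ioi 0) volume := hvL2.integrable_sq
  have hIg2 : IntegrableOn (fun y => ((r y)^2 * v' y)^2) (Ioi 0) volume :=
    hvxL2.integrable_sq
  set I1 := ∫ y in Ioi (0:ℝ), (v y)^2 with hI1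
  set I2 := ∫ y in Ioi (0:ℝ), ((r y)^2 * v' y)^2 with hI2
  have hI1nn : 0 ≤ I1 := setIntegral_nonneg measurableSet_Ioi (fun z _ => sq_nonneg _)
  have hI2nn : 0 ≤ I2 := setIntegral_nonneg measurableSet_Ioi (fun z _ => sq_nonneg _)
  intro x hx
  have hx0 : x ∈ Ici (0:ℝ) := hx.le
  have hrx : 0 < r x := hrpos x hx0
  -- small values of v exist arbitrarily far out
  have hsmall : ∀ ε > (0:ℝ), ∃ y, x ≤ y ∧ (v y)^2 < ε := by
    intro ε hε
    by_contra hcon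
    push_neg at hcon
    set T : ℝ := (I1 + 1) / ε with hT
    have hT0 : 0 < T := by positivity
    have hsub : Ioc x (x + T) ⊆ Ioi (0:ℝ) := fun z hz => lt_trans hx hz.1
    have h1 : ∫ z in Ioc x (x + T), ε ≤ ∫ z in Ioc x (x + T), (v z)^2 := by
      apply setIntegral_mono_on (integrableOn_const measure_Ioc_lt_top.ne)
        (hIv2.mono_set hsub) measurableSet_Ioc
      intro z hz
      exact hcon z hz.1.le
    have h2 : ∫ z in Ioc x (x + T), (v z)^2 ≤ I1 := by
      apply setIntegral_mono_set hIv2 (ae_of_all _ fun z => sq_nonneg _)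
        (HasSubset.Subset.eventuallyLE hsub)
    have h3 : ∫ z in Ioc x (x + T), ε = T * ε := by
      rw [setIntegral_const, measureReal_def, Real.volume_Ioc]
      rw [show x + T - x = T by ring, ENNReal.toReal_ofReal hT0.le]
      simp [smul_eq_mul]
    have h4 : T * ε = I1 + 1 := by
      rw [hT]
      field_simp
    linarith
  -- main estimate for y ≥ x
  have key : ∀ y, x ≤ y → (r x)^2 * (v x)^2 ≤ (r x)^2 * (v y)^2 + (I1 + I2) := by
    intro y hxy
    have hsub : Ioc x y ⊆ Ioi (0:ℝ) := fun z hz => lt_trans hx hz.1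
    have hsubI : Icc x y ⊆ Ici (0:ℝ) := fun z hz => le_trans hx0 hz.1
    -- integrability of r² v' on Ioc x y
    have hgi : IntegrableOn (fun z => (r z)^2 * v' z) (Ioc x y) volume := by
      have h := hvxL2.restrict (Ioc x y)
      rw [Measure.restrict_restrict measurableSet_Ioc, inter_eq_left.2 hsub] at h
      exact h.integrable one_le_two
    have hii_g : IntervalIntegrable (fun z => (r z)^2 * v' z) volume x y :=
      (intervalIntegrable_iff_integrableOn_Ioc_of_le hxy).2 hgi
    -- continuity of 2 v / r²
    have hcont : ContinuousOn (fun z => 2 * v z / (r z)^2) (uIcc x y) := by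
      rw [uIcc_of_le hxy]
      apply ContinuousOn.div
      · exact (continuousOn_const.mul
          (fun w hw => ((hv w (hsubI hw)).continuousAt).continuousWithinAt))
      · exact ContinuousOn.pow
          (fun w hw => ((hr w (hsubI hw)).continuousAt).continuousWithinAt) 2
      · intro w hw
        exact pow_ne_zero 2 (hrpos w (hsubI hw)).ne'
    have hii_prod : IntervalIntegrable (fun z => (2 * v z / (r z)^2) * ((r z)^2 * v' z))
        volume x y := hii_g.continuousOn_mul hcont
    have hii2 : IntervalIntegrable (fun z => 2 * v z * v' z) volume x y := by
      rw [intervalIntegrable_iff_integrableOn_Ioc_of_le hxy] at hii_prod ⊢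
      apply hii_prod.congr_fun ?_ measurableSet_Ioc
      intro z hz
      have hrz : r z ≠ 0 := (hrpos z (hsubI (Ioc_subset_Icc_self hz))).ne'
      field_simp
    -- fundamental theorem of calculus
    have hftc : ∫ z in x..y, 2 * v z * v' z = (v y)^2 - (v x)^2 := by
      apply intervalIntegral.integral_eq_sub_of_hasDerivAt ?_ hii2
      intro z hz
      rw [uIcc_of_le hxy] at hz
      have : HasDerivAt (fun w => v w ^ 2) ((2:ℕ) * v z ^ (2 - 1) * v' z) z :=
        (hv z (hsubI hz)).pow 2
      exact this.congr_deriv (by norm_num)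
    -- pointwise inequality
    have hpt : ∀ z ∈ Icc x y,
        -((r x)^2 * (2 * v z * v' z)) ≤ (v z)^2 + ((r z)^2 * v' z)^2 := by
      intro z hz
      have hrz : 0 < r z := hrpos z (hsubI hz)
      have hrxz : r x ≤ r z := hrmono hx0 (hsubI hz) hz.1
      have hc2d2 : (r x)^2 ≤ (r z)^2 := by nlinarith
      rcases le_total 0 (v z * v' z) with hvw | hvw
      · nlinarith [sq_nonneg (v z), sq_nonneg ((r z)^2 * v' z), sq_nonneg (r x)]
      · nlinarith [sq_nonneg (v z + (r z)^2 * v' z),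
          mul_nonneg (neg_nonneg.2 hvw) (sub_nonneg.2 hc2d2)]
    -- integrate the inequality
    have hii_lhs : IntervalIntegrable (fun z => -((r x)^2 * (2 * v z * v' z))) volume x y :=
      (hii2.const_mul ((r x)^2)).neg
    have hii_rhs : IntervalIntegrable (fun z => (v z)^2 + ((r z)^2 * v' z)^2) volume x y :=
      (intervalIntegrable_iff_integrableOn_Ioc_of_le hxy).2
        ((hIv2.mono_set hsub).add (hIg2.mono_set hsub))
    have hmono := intervalIntegral.integral_mono_on hxy hii_lhs hii_rhs hpt
    have hlhs : ∫ z in x..y, -((r x)^2 * (2 * v z * v' z))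
        = (r x)^2 * (v x)^2 - (r x)^2 * (v y)^2 := by
      rw [intervalIntegral.integral_neg, intervalIntegral.integral_const_mul, hftc]
      ring
    have hrhs : ∫ z in x..y, ((v z)^2 + ((r z)^2 * v' z)^2) ≤ I1 + I2 := by
      rw [intervalIntegral.integral_of_le hxy]
      have : (∫ z in Ioc x y, ((v z)^2 + ((r z)^2 * v' z)^2))
          ≤ ∫ z in Ioi (0:ℝ), ((v z)^2 + ((r z)^2 * v' z)^2) := by
        apply setIntegral_mono_set (hIv2.add hIg2)
          (ae_of_all _ fun z => add_nonneg (sq_nonneg _) (sq_nonneg _))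
          (HasSubset.Subset.eventuallyLE hsub)
      rw [integral_add hIv2 hIg2] at this
      exact this
    rw [hlhs] at hmono
    linarith
  -- conclude by letting v(y)² be small
  have hM : (r x)^2 * (v x)^2 ≤ I1 + I2 := by
    apply le_of_forall_pos_le_add
    intro ε hε
    obtain ⟨y, hxy, hy⟩ := hsmall (ε / (r x)^2) (by positivity)
    have h1 := key y hxy
    have h2 : (r x)^2 * (v y)^2 < ε := by
      rw [lt_div_iff₀ (by positivity : (0:ℝ) < (r x)^2)] at hy
      nlinarith
    linarith
  rw [le_inv_mul_iff₀ (by positivity : (0:ℝ) < (r x)^2)]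
  exact hM
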